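/- arXiv:1003.0349 — 2 statements merged into one kernel-verified Lean document; each statement's English description precedes it below -/
import Mathlib

section
/- Let E be the invariant set of a semiconformal iterated function system {φ_i : i ∈ I} on a complete metric space. Then the collection {φ_i(E) : i ∈ I*} is a tractable controlled Moran construction. -/
open Metric Set Filter MeasureTheory Topology
open scoped ENNReal ENat

namespace Moran

/-- Composition of the maps of an IFS along a finite word:
`comp φ (i₁, …, iₙ) = φ i₁ ∘ ⋯ ∘ φ iₙ`. -/
def comp {ι M : Type*} (φ : ι → M → M) : List ι → M → M
  | [] => id
  | a :: l => φ a ∘ comp φ l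

/-- The initial segment (of length `n`) of an infinite word. -/
def pre {ι : Type*} (j : ℕ → ι) (n : ℕ) : List ι := List.ofFn fun k : Fin n => j k

/-- The cylinder set of a finite word, as a subset of the symbol space `I^∞`. -/
def cylinder {ι : Type*} (i : List ι) : Set (ℕ → ι) := {j | pre j i.length = i}

/-- Two finite words are incomparable if neither is an initial segment of the other. -/
def Incomp {ι : Type*} (i j : List ι) : Prop := ¬ i <+: j ∧ ¬ j <+: i

/-- A metric space is doubling if there is `κ` such that every ball of radius `2r`
can be covered by `κ` balls of radius `r`. -/
def DoublingSpace (M : Type*) [MetricSpace M] : Prop :=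
  ∃ κ : ℕ, ∀ (x : M) (r : ℝ), ∃ s : Finset M,
    s.card ≤ κ ∧ ball x (2 * r) ⊆ ⋃ y ∈ s, ball y r

/-- A weakly controlled Moran construction (WCMC) over the index set `ι`
in the metric space `M`. The sets are indexed by nonempty finite words,
modelled as nonempty lists; `i.dropLast` plays the role of `i⁻`. -/
structure WCMC (ι M : Type*) [Fintype ι] [MetricSpace M] where
  X : List ι → Set M
  compact : ∀ i : List ι, i ≠ [] → IsCompact (X i)
  diam_pos : ∀ i : List ι, i ≠ [] → 0 < diam (X i)
  D : ℝ
  one_le_D : 1 ≤ D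
  nested : ∀ i : List ι, 2 ≤ i.length → X i ⊆ X i.dropLast
  small : ∃ n : ℕ, 1 ≤ n ∧ ∀ i : List ι, i.length = n → diam (X i) < D⁻¹
  submult : ∀ i j : List ι, i ≠ [] → j ≠ [] →
    diam (X (i ++ j)) ≤ D * diam (X i) * diam (X j)
  lower : ∀ i : List ι, 2 ≤ i.length → D⁻¹ * diam (X i.dropLast) ≤ diam (X i)

/-- A controlled Moran construction (CMC). -/
structure CMC (ι M : Type*) [Fintype ι] [MetricSpace M] where
  X : List ι → Set M
  compact : ∀ i : List ι, i ≠ [] → IsCompact (X i)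
  diam_pos : ∀ i : List ι, i ≠ [] → 0 < diam (X i)
  D : ℝ
  one_le_D : 1 ≤ D
  nested : ∀ i : List ι, 2 ≤ i.length → X i ⊆ X i.dropLast
  small : ∃ n : ℕ, 1 ≤ n ∧ ∀ i : List ι, i.length = n → diam (X i) < D⁻¹
  controlled_le : ∀ i j : List ι, i ≠ [] → j ≠ [] →
    diam (X (i ++ j)) ≤ D * (diam (X i) * diam (X j))
  controlled_ge : ∀ i j : List ι, i ≠ [] → j ≠ [] →
    D⁻¹ * (diam (X i) * diam (X j)) ≤ diam (X (i ++ j))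

/-- The limit set `E = π(I^∞)` of a Moran construction. -/
def limitSet {ι M : Type*} [MetricSpace M] (X : List ι → Set M) : Set M :=
  {x | ∃ j : ℕ → ι, ∀ n : ℕ, 1 ≤ n → x ∈ X (pre j n)}

/-- `Z(r)`: the words whose construction piece has diameter at most `r` while the
parent piece has diameter greater than `r` (first-generation words with diameter
at most `r` are included). -/
def Zr {ι M : Type*} [MetricSpace M] (X : List ι → Set M) (r : ℝ) : Set (List ι) :=
  {i | i ≠ [] ∧ diam (X i) ≤ r ∧ (i.length = 1 ∨ r < diam (X i.dropLast))}

/-- `Z(x,r)`: the words of `Z(r)` whose construction piece meets `B(x,r)`. -/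
def Zx {ι M : Type*} [MetricSpace M] (X : List ι → Set M) (x : M) (r : ℝ) :
    Set (List ι) :=
  {i | i ∈ Zr X r ∧ (X i ∩ ball x r).Nonempty}

/-- The finite clustering property: `sup_{x ∈ E} limsup_{r ↓ 0} #Z(x,r) < ∞`. -/
def FCP {ι M : Type*} [MetricSpace M] (X : List ι → Set M) : Prop :=
  ∃ K : ℕ, ∀ x ∈ limitSet X,
    Filter.limsup (fun r : ℝ => (Zx X x r).encard) (𝓝[>] 0) ≤ (K : ℕ∞)

/-- The ball condition. -/
def BallCond {ι M : Type*} [MetricSpace M] (X : List ι → Set M) : Prop :=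
  ∃ δ : ℝ, 0 < δ ∧ δ < 1 ∧ ∀ x ∈ limitSet X, ∃ rx > 0, ∀ r : ℝ, 0 < r → r < rx →
    ∃ c : List ι → M, (∀ i ∈ Zx X x r, infDist (c i) (X i) < r) ∧
      (Zx X x r).Pairwise fun i j => Disjoint (ball (c i) (δ * r)) (ball (c j) (δ * r))

/-- Distance between two subsets of a metric space. -/
noncomputable def setDist {M : Type*} [MetricSpace M] (s t : Set M) : ℝ :=
  ENNReal.toReal (⨅ x ∈ s, EMetric.infEdist x t)

/-- Tractability of a Moran construction. -/
def Tractable {ι M : Type*} [MetricSpace M] (X : List ι → Set M) : Prop :=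
  ∃ C : ℝ, 1 ≤ C ∧ ∀ r : ℝ, 0 < r → ∀ h i j : List ι, h ≠ [] →
    i ∈ Zr X r → j ∈ Zr X r → setDist (X i) (X j) ≤ r →
      setDist (X (h ++ i)) (X (h ++ j)) ≤ C * diam (X h) * r

/-- The `n`-th pressure sum `Σ_{i ∈ I^n} diam(X_i)^t`. -/
noncomputable def presSum {ι M : Type*} [Fintype ι] [MetricSpace M]
    (X : List ι → Set M) (t : ℝ) (n : ℕ) : ℝ :=
  ∑ i : Fin n → ι, diam (X (List.ofFn i)) ^ t

/-- `P` is the topological pressure of the construction `X`: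
`P(t) = lim_{n → ∞} (1/n) log Σ_{i ∈ I^n} diam(X_i)^t` for every `t ≥ 0`. -/
def IsPressure {ι M : Type*} [Fintype ι] [MetricSpace M]
    (X : List ι → Set M) (P : ℝ → ℝ) : Prop :=
  ∀ t : ℝ, 0 ≤ t →
    Tendsto (fun n : ℕ => (1 / (n : ℝ)) * Real.log (presSum X t n)) atTop (𝓝 (P t))

/-- The covering number `N(E,r)`: the minimal number of open balls of radius `r`
needed to cover `E`. -/
noncomputable def coverNum {M : Type*} [MetricSpace M] (E : Set M) (r : ℝ) : ℕ :=
  sInf {k : ℕ | ∃ s : Finset M, s.card = k ∧ E ⊆ ⋃ y ∈ s, ball y r}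

/-- The upper Minkowski dimension `limsup_{r ↓ 0} log N(E,r) / (−log r)`. -/
noncomputable def upMink {M : Type*} [MetricSpace M] (E : Set M) : EReal :=
  Filter.limsup
    (fun r : ℝ => ((Real.log (coverNum E r) / (-Real.log r) : ℝ) : EReal)) (𝓝[>] 0)

/-- The `n`-th stage `M^ψ_n(A)` of the Carathéodory construction on the symbol
space: the infimum of `Σ_{i ∈ C} ψ(i)` over covers of `A` by cylinders of words of
length at least `n`. -/
noncomputable def Mpsin {ι : Type*} (ψ : List ι → ℝ) (n : ℕ) (A : Set (ℕ → ι)) :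
    ℝ≥0∞ :=
  ⨅ (C : Set (List ι)) (_ : ∀ i ∈ C, i ≠ [] ∧ n ≤ i.length)
    (_ : A ⊆ ⋃ i ∈ C, cylinder i), ∑' i : C, ENNReal.ofReal (ψ i)

/-- `M^ψ(A) = lim_{n → ∞} M^ψ_n(A)`; since the stages are nondecreasing in `n`,
the limit equals the supremum. -/
noncomputable def Mpsi {ι : Type*} (ψ : List ι → ℝ) (A : Set (ℕ → ι)) : ℝ≥0∞ :=
  ⨆ n : ℕ, Mpsin ψ n A

/-- A semiconformal iterated function system on `M`: finitely many contractive
injections `φ i` whose invariant set `E` has positive diameter, together with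
semiconformality bounds `s̲_i, s̄_i` (comparable via `D`) for the iterated maps. -/
structure SCIFS (ι M : Type*) [Fintype ι] [MetricSpace M] where
  φ : ι → M → M
  contr : ∀ i : ι, ∃ s : ℝ, 0 ≤ s ∧ s < 1 ∧ ∀ x y : M, dist (φ i x) (φ i y) ≤ s * dist x y
  inj : ∀ i : ι, Function.Injective (φ i)
  E : Set M
  E_compact : IsCompact E
  E_nonempty : E.Nonempty
  E_invariant : E = ⋃ i : ι, φ i '' E
  diamE_pos : 0 < diam E
  slo : List ι → ℝ
  shi : List ι → ℝ
  D : ℝ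
  one_le_D : 1 ≤ D
  slo_pos : ∀ i : List ι, i ≠ [] → 0 < slo i
  slo_le_shi : ∀ i : List ι, i ≠ [] → slo i ≤ shi i
  shi_lt_one : ∀ i : List ι, i ≠ [] → shi i < 1
  shi_le_D_slo : ∀ i : List ι, i ≠ [] → shi i ≤ D * slo i
  lower : ∀ i : List ι, i ≠ [] → ∀ x y : M,
    slo i * dist x y ≤ dist (comp φ i x) (comp φ i y)
  upper : ∀ i : List ι, i ≠ [] → ∀ x y : M,
    dist (comp φ i x) (comp φ i y) ≤ shi i * dist x y

/-- The Moran construction pieces `E_i = φ_i(E)` associated with an IFS. -/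
def SCIFS.Xs {ι M : Type*} [Fintype ι] [MetricSpace M] (S : SCIFS ι M) :
    List ι → Set M := fun i => comp S.φ i '' S.E

/-- The open set condition. -/
def OSC {ι M : Type*} [Fintype ι] [MetricSpace M] (S : SCIFS ι M) : Prop :=
  ∃ U : Set M, IsOpen U ∧ U.Nonempty ∧ ∀ i j : List ι, i ≠ [] → j ≠ [] →
    Incomp i j → Disjoint (comp S.φ i '' U) (comp S.φ j '' U)

/-- The strong open set condition. -/
def SOSC {ι M : Type*} [Fintype ι] [MetricSpace M] (S : SCIFS ι M) : Prop :=
  ∃ U : Set M, IsOpen U ∧ U.Nonempty ∧ (U ∩ S.E).Nonempty ∧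
    ∀ i j : List ι, i ≠ [] → j ≠ [] →
      Incomp i j → Disjoint (comp S.φ i '' U) (comp S.φ j '' U)

/-- An essential open set for an IFS: a dense open set meeting the invariant set. -/
def EssentialOpen {ι M : Type*} [Fintype ι] [MetricSpace M] (S : SCIFS ι M)
    (W : Set M) : Prop :=
  IsOpen W ∧ Dense W ∧ (W ∩ S.E).Nonempty

/-- A properly semiconformal IFS. -/
def ProperlySC {ι M : Type*} [Fintype ι] [MetricSpace M] (S : SCIFS ι M) : Prop :=
  ∃ W : Set M, EssentialOpen S W ∧ W ≠ univ ∧ ∀ x ∈ W, ∃ lam : ℝ, 1 ≤ lam ∧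
    ∀ i : List ι, i ≠ [] →
      infDist (comp S.φ i x) (comp S.φ i '' Wᶜ) ≤
        lam * infDist (comp S.φ i x) ((comp S.φ i '' W)ᶜ)

end Moran

namespace Moran

variable {ι M : Type*} [Fintype ι] [MetricSpace M]

lemma comp_append (φ : ι → M → M) (i j : List ι) :
    comp φ (i ++ j) = comp φ i ∘ comp φ j := by
  induction i with
  | nil => rfl
  | cons a l ih => simp [comp, ih, Function.comp_assoc]

lemma continuous_comp (S : SCIFS ι M) (i : List ι) : Continuous (comp S.φ i) := by
  induction i with
  | nil => exact continuous_id
  | cons a l ih =>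
    obtain ⟨s, hs0, _, hs⟩ := S.contr a
    exact ((LipschitzWith.of_dist_le_mul (K := ⟨s, hs0⟩) hs).continuous).comp ih

lemma comp_image_subset (S : SCIFS ι M) (i : List ι) : comp S.φ i '' S.E ⊆ S.E := by
  induction i with
  | nil => simp [comp]
  | cons a l ih =>
    rintro x ⟨y, hy, rfl⟩
    rw [S.E_invariant]
    exact Set.mem_iUnion.2 ⟨a, ⟨comp S.φ l y, ih ⟨y, hy, rfl⟩, rfl⟩⟩

lemma Xs_nonempty (S : SCIFS ι M) (i : List ι) : (S.Xs i).Nonempty :=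
  S.E_nonempty.image _

lemma Xs_compact (S : SCIFS ι M) (i : List ι) : IsCompact (S.Xs i) :=
  S.E_compact.image (continuous_comp S i)

lemma Xs_bounded (S : SCIFS ι M) (i : List ι) : Bornology.IsBounded (S.Xs i) :=
  (Xs_compact S i).isBounded

lemma Xs_append (S : SCIFS ι M) (i j : List ι) :
    S.Xs (i ++ j) = comp S.φ i '' S.Xs j := by
  unfold SCIFS.Xs
  rw [comp_append, Set.image_comp]

lemma shi_nonneg (S : SCIFS ι M) (i : List ι) (hi : i ≠ []) : 0 ≤ S.shi i :=
  le_trans (S.slo_pos i hi).le (S.slo_le_shi i hi)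

lemma diam_Xs_le (S : SCIFS ι M) (i : List ι) (hi : i ≠ []) :
    diam (S.Xs i) ≤ S.shi i * diam S.E := by
  apply diam_le_of_forall_dist_le (mul_nonneg (shi_nonneg S i hi) diam_nonneg)
  rintro x ⟨u, hu, rfl⟩ y ⟨v, hv, rfl⟩
  calc dist (comp S.φ i u) (comp S.φ i v) ≤ S.shi i * dist u v := S.upper i hi u v
    _ ≤ S.shi i * diam S.E :=
      mul_le_mul_of_nonneg_left (dist_le_diam_of_mem S.E_compact.isBounded hu hv)
        (shi_nonneg S i hi)

lemma le_diam_Xs (S : SCIFS ι M) (i : List ι) (hi : i ≠ []) :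
    S.slo i * diam S.E ≤ diam (S.Xs i) := by
  have hslo := S.slo_pos i hi
  rw [mul_comm, ← le_div_iff₀ hslo]
  apply diam_le_of_forall_dist_le (div_nonneg diam_nonneg hslo.le)
  intro u hu v hv
  rw [le_div_iff₀ hslo, mul_comm]
  calc S.slo i * dist u v ≤ dist (comp S.φ i u) (comp S.φ i v) := S.lower i hi u v
    _ ≤ diam (S.Xs i) := dist_le_diam_of_mem (Xs_bounded S i) ⟨u, hu, rfl⟩ ⟨v, hv, rfl⟩

lemma diam_Xs_pos (S : SCIFS ι M) (i : List ι) (hi : i ≠ []) : 0 < diam (S.Xs i) :=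
  lt_of_lt_of_le (mul_pos (S.slo_pos i hi) S.diamE_pos) (le_diam_Xs S i hi)

lemma diam_append_le (S : SCIFS ι M) (i j : List ι) (hi : i ≠ []) :
    diam (S.Xs (i ++ j)) ≤ S.shi i * diam (S.Xs j) := by
  rw [Xs_append]
  apply diam_le_of_forall_dist_le (mul_nonneg (shi_nonneg S i hi) diam_nonneg)
  rintro x ⟨u, hu, rfl⟩ y ⟨v, hv, rfl⟩
  calc dist (comp S.φ i u) (comp S.φ i v) ≤ S.shi i * dist u v := S.upper i hi u v
    _ ≤ S.shi i * diam (S.Xs j) :=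
      mul_le_mul_of_nonneg_left (dist_le_diam_of_mem (Xs_bounded S j) hu hv)
        (shi_nonneg S i hi)

lemma le_diam_append (S : SCIFS ι M) (i j : List ι) (hi : i ≠ []) :
    S.slo i * diam (S.Xs j) ≤ diam (S.Xs (i ++ j)) := by
  have hslo := S.slo_pos i hi
  rw [mul_comm, ← le_div_iff₀ hslo]
  apply diam_le_of_forall_dist_le (div_nonneg diam_nonneg hslo.le)
  intro u hu v hv
  rw [le_div_iff₀ hslo, mul_comm]
  calc S.slo i * dist u v ≤ dist (comp S.φ i u) (comp S.φ i v) := S.lower i hi u v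
    _ ≤ diam (S.Xs (i ++ j)) :=
      dist_le_diam_of_mem (Xs_bounded S (i ++ j))
        (by rw [Xs_append]; exact ⟨u, hu, rfl⟩) (by rw [Xs_append]; exact ⟨v, hv, rfl⟩)

end Moran


/-- For the invariant set `E` of a semiconformal IFS on a complete
metric space, the collection `{φ_i(E) : i ∈ I*}` is a tractable CMC. -/
theorem stmt12 {ι M : Type*} [Fintype ι] [MetricSpace M] [CompleteSpace M]
    (hcard : 2 ≤ Fintype.card ι) (S : Moran.SCIFS ι M) :
    (∃ C : Moran.CMC ι M, ∀ i : List ι, C.X i = S.Xs i) ∧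
      Moran.Tractable S.Xs := by
  have hne : Nonempty ι := Fintype.card_pos_iff.mp (by omega)
  set e := diam S.E with he_def
  have he : 0 < e := S.diamE_pos
  set D' : ℝ := max (max 1 (S.D / e)) (S.D * e) with hD'def
  have hD'1 : 1 ≤ D' := le_trans (le_max_left _ _) (le_max_left _ _)
  have hD'2 : S.D / e ≤ D' := le_trans (le_max_right _ _) (le_max_left _ _)
  have hD'3 : S.D * e ≤ D' := le_max_right _ _
  have hD'pos : 0 < D' := lt_of_lt_of_le one_pos hD'1
  -- uniform contraction factor
  set σ : ℝ := Finset.univ.sup' Finset.univ_nonempty (fun a : ι => S.shi [a]) with hσdef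
  have hσ1 : σ < 1 := by
    rw [hσdef, Finset.sup'_lt_iff]
    intro a _
    exact S.shi_lt_one [a] (by simp)
  have hσ0 : 0 ≤ σ := by
    obtain ⟨a⟩ := hne
    exact le_trans (Moran.shi_nonneg S [a] (by simp)) (Finset.le_sup' (fun a : ι => S.shi [a]) (Finset.mem_univ a))
  have hcomp : ∀ (i : List ι) (x y : M),
      dist (Moran.comp S.φ i x) (Moran.comp S.φ i y) ≤ σ ^ i.length * dist x y := by
    intro i
    induction i with
    | nil => intro x y; simp [Moran.comp]
    | cons a l ih =>
      intro x y
      calc dist (Moran.comp S.φ (a :: l) x) (Moran.comp S.φ (a :: l) y)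
          ≤ S.shi [a] * dist (Moran.comp S.φ l x) (Moran.comp S.φ l y) :=
            S.upper [a] (by simp) _ _
        _ ≤ σ * (σ ^ l.length * dist x y) := by
            apply mul_le_mul (Finset.le_sup' (fun a : ι => S.shi [a]) (Finset.mem_univ a)) (ih x y) dist_nonneg hσ0
        _ = σ ^ (a :: l).length * dist x y := by rw [List.length_cons, pow_succ]; ring
  have hsmall : ∃ n : ℕ, 1 ≤ n ∧ ∀ i : List ι, i.length = n → diam (S.Xs i) < D'⁻¹ := by
    have htend : Filter.Tendsto (fun n : ℕ => σ ^ n * e) atTop (𝓝 0) := by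
      have := tendsto_pow_atTop_nhds_zero_of_lt_one hσ0 hσ1
      simpa using this.mul_const e
    have hev : ∀ᶠ n : ℕ in atTop, σ ^ n * e < D'⁻¹ :=
      htend.eventually (gt_mem_nhds (by positivity))
    obtain ⟨n, hn1, hn2⟩ := (hev.and (Filter.eventually_ge_atTop 1)).exists
    refine ⟨n, hn2, fun i hi => ?_⟩
    have hiN : i ≠ [] := by
      intro h; rw [h] at hi; simp at hi; omega
    have : diam (S.Xs i) ≤ σ ^ n * e := by
      apply diam_le_of_forall_dist_le (mul_nonneg (pow_nonneg hσ0 n) he.le)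
      rintro x ⟨u, hu, rfl⟩ y ⟨v, hv, rfl⟩
      calc dist _ _ ≤ σ ^ i.length * dist u v := hcomp i u v
        _ ≤ σ ^ n * e := by
            rw [hi]
            exact mul_le_mul_of_nonneg_left
              (dist_le_diam_of_mem S.E_compact.isBounded hu hv) (pow_nonneg hσ0 n)
    exact lt_of_le_of_lt this hn1
  constructor
  · refine ⟨⟨S.Xs, fun i hi => Moran.Xs_compact S i, fun i hi => Moran.diam_Xs_pos S i hi,
      D', hD'1, ?_, hsmall, ?_, ?_⟩, fun i => rfl⟩
    · -- nested
      intro i hi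
      have hiN : i ≠ [] := by intro h; rw [h] at hi; simp at hi
      conv_lhs => rw [← List.dropLast_append_getLast hiN]
      rw [Moran.Xs_append]
      exact Set.image_mono (Moran.comp_image_subset S [i.getLast hiN])
    · -- controlled_le
      intro i j hi hj
      have h1 : diam (S.Xs (i ++ j)) ≤ S.shi i * diam (S.Xs j) :=
        Moran.diam_append_le S i j hi
      have h2 : S.shi i ≤ S.D * S.slo i := S.shi_le_D_slo i hi
      have h3 : S.slo i * e ≤ diam (S.Xs i) := Moran.le_diam_Xs S i hi
      have h4 : 0 ≤ diam (S.Xs j) := diam_nonneg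
      have hD0 : 0 ≤ S.D := le_trans zero_le_one S.one_le_D
      calc diam (S.Xs (i ++ j)) ≤ S.shi i * diam (S.Xs j) := h1
        _ ≤ (S.D * S.slo i) * diam (S.Xs j) := mul_le_mul_of_nonneg_right h2 h4
        _ = (S.D / e) * ((S.slo i * e) * diam (S.Xs j)) := by field_simp
        _ ≤ (S.D / e) * (diam (S.Xs i) * diam (S.Xs j)) := by
            apply mul_le_mul_of_nonneg_left (mul_le_mul_of_nonneg_right h3 h4)
            positivity
        _ ≤ D' * (diam (S.Xs i) * diam (S.Xs j)) := by
            apply mul_le_mul_of_nonneg_right hD'2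
            positivity
    · -- controlled_ge
      intro i j hi hj
      have h1 : S.slo i * diam (S.Xs j) ≤ diam (S.Xs (i ++ j)) :=
        Moran.le_diam_append S i j hi
      have h2 : diam (S.Xs i) ≤ S.shi i * e := Moran.diam_Xs_le S i hi
      have h3 : S.shi i ≤ S.D * S.slo i := S.shi_le_D_slo i hi
      have h4 : 0 ≤ diam (S.Xs j) := diam_nonneg
      have hD0 : 0 < S.D := lt_of_lt_of_le one_pos S.one_le_D
      have hDe : 0 < S.D * e := mul_pos hD0 he
      calc D'⁻¹ * (diam (S.Xs i) * diam (S.Xs j))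
          ≤ (S.D * e)⁻¹ * (diam (S.Xs i) * diam (S.Xs j)) := by
            apply mul_le_mul_of_nonneg_right
              (inv_anti₀ hDe hD'3)
            positivity
        _ ≤ (S.D * e)⁻¹ * ((S.shi i * e) * diam (S.Xs j)) := by
            apply mul_le_mul_of_nonneg_left (mul_le_mul_of_nonneg_right h2 h4)
            positivity
        _ ≤ (S.D * e)⁻¹ * (((S.D * S.slo i) * e) * diam (S.Xs j)) := by
            apply mul_le_mul_of_nonneg_left
            · apply mul_le_mul_of_nonneg_right (mul_le_mul_of_nonneg_right h3 he.le) h4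
            · positivity
        _ = S.slo i * diam (S.Xs j) := by field_simp
        _ ≤ diam (S.Xs (i ++ j)) := h1
  · -- tractability
    refine ⟨max 1 (S.D / e), le_max_left _ _, ?_⟩
    intro r hr h i j hh hi hj hd
    have hiN : i ≠ [] := hi.1
    have hjN : j ≠ [] := hj.1
    have hsh : 0 < S.shi h := lt_of_lt_of_le (S.slo_pos h hh) (S.slo_le_shi h hh)
    have key : ∀ δ > (0:ℝ),
        Moran.setDist (S.Xs (h ++ i)) (S.Xs (h ++ j)) ≤ S.shi h * r + δ := by
      intro δ hδ
      set δ' := δ / S.shi h with hδ'def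
      have hδ' : 0 < δ' := div_pos hδ hsh
      obtain ⟨a, ha⟩ := Moran.Xs_nonempty S i
      obtain ⟨b, hb⟩ := Moran.Xs_nonempty S j
      have hTne : (⨅ x ∈ S.Xs i, EMetric.infEdist x (S.Xs j)) ≠ ⊤ :=
        ne_top_of_le_ne_top (edist_ne_top a b)
          (le_trans (iInf₂_le a ha) (EMetric.infEdist_le_edist_of_mem hb))
      have hT : (⨅ x ∈ S.Xs i, EMetric.infEdist x (S.Xs j)) < ENNReal.ofReal (r + δ') := by
        calc (⨅ x ∈ S.Xs i, EMetric.infEdist x (S.Xs j)) ≤ ENNReal.ofReal r :=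
              (ENNReal.le_ofReal_iff_toReal_le hTne hr.le).mpr hd
          _ < ENNReal.ofReal (r + δ') := by
              rw [ENNReal.ofReal_lt_ofReal_iff (by linarith)]; linarith
      obtain ⟨x, hx, hx2⟩ : ∃ x ∈ S.Xs i,
          EMetric.infEdist x (S.Xs j) < ENNReal.ofReal (r + δ') := by
        by_contra hcon
        push_neg at hcon
        exact hT.not_ge (le_iInf₂ hcon)
      obtain ⟨y, hy, hxy⟩ := EMetric.infEdist_lt_iff.mp hx2
      have hdxy : dist x y < r + δ' := by
        rw [edist_dist] at hxy
        exact (ENNReal.ofReal_lt_ofReal_iff (by linarith)).mp hxy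
      have hfx : Moran.comp S.φ h x ∈ S.Xs (h ++ i) := by
        rw [Moran.Xs_append]; exact ⟨x, hx, rfl⟩
      have hfy : Moran.comp S.φ h y ∈ S.Xs (h ++ j) := by
        rw [Moran.Xs_append]; exact ⟨y, hy, rfl⟩
      have h2 : Moran.setDist (S.Xs (h ++ i)) (S.Xs (h ++ j))
          ≤ dist (Moran.comp S.φ h x) (Moran.comp S.φ h y) := by
        unfold Moran.setDist
        rw [dist_edist]
        exact ENNReal.toReal_mono (edist_ne_top _ _)
          (le_trans (iInf₂_le _ hfx) (EMetric.infEdist_le_edist_of_mem hfy))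
      calc Moran.setDist (S.Xs (h ++ i)) (S.Xs (h ++ j))
          ≤ dist (Moran.comp S.φ h x) (Moran.comp S.φ h y) := h2
        _ ≤ S.shi h * dist x y := S.upper h hh x y
        _ ≤ S.shi h * (r + δ') := mul_le_mul_of_nonneg_left hdxy.le hsh.le
        _ = S.shi h * r + δ := by rw [mul_add, hδ'def, mul_div_cancel₀ _ hsh.ne']
    have hmain : Moran.setDist (S.Xs (h ++ i)) (S.Xs (h ++ j)) ≤ S.shi h * r :=
      le_of_forall_pos_le_add key
    have h2 : S.shi h ≤ S.D * S.slo h := S.shi_le_D_slo h hh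
    have h3 : S.slo h * e ≤ diam (S.Xs h) := Moran.le_diam_Xs S h hh
    have hD0 : 0 ≤ S.D := le_trans zero_le_one S.one_le_D
    calc Moran.setDist (S.Xs (h ++ i)) (S.Xs (h ++ j)) ≤ S.shi h * r := hmain
      _ ≤ (S.D / e) * diam (S.Xs h) * r := by
          apply mul_le_mul_of_nonneg_right _ hr.le
          calc S.shi h ≤ S.D * S.slo h := h2
            _ = (S.D / e) * (S.slo h * e) := by field_simp
            _ ≤ (S.D / e) * diam (S.Xs h) := by
                apply mul_le_mul_of_nonneg_left h3; positivity
      _ ≤ max 1 (S.D / e) * diam (S.Xs h) * r := by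
          apply mul_le_mul_of_nonneg_right _ hr.le
          exact mul_le_mul_of_nonneg_right (le_max_right _ _) diam_nonneg
end

section
/- A semiconformal iterated function system is properly semiconformal if and only if there is an essential open set W with W ≠ M such that for each x ∈ W there is r_x > 0 so that B(φ_i(x), s̲_i·r) ⊂ φ_i(B(x,r)) whenever x ∈ W, 0 < r ≤ r_x and i ∈ I*. -/
open Metric Set Filter MeasureTheory Topology
open scoped ENNReal ENat

/-- A semiconformal IFS is properly semiconformal iff there is an
essential open set `W ≠ M` such that for each `x ∈ W` there is `r_x > 0` with
`B(φ_i(x), s̲_i·r) ⊆ φ_i(B(x,r))` whenever `0 < r ≤ r_x` and `i ∈ I*`. -/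
theorem stmt15 {ι M : Type*} [Fintype ι] [MetricSpace M] [CompleteSpace M]
    (hcard : 2 ≤ Fintype.card ι) (S : Moran.SCIFS ι M) :
    Moran.ProperlySC S ↔
      ∃ W : Set M, Moran.EssentialOpen S W ∧ W ≠ Set.univ ∧
        ∀ x ∈ W, ∃ rx : ℝ, 0 < rx ∧ ∀ r : ℝ, 0 < r → r ≤ rx →
          ∀ i : List ι, i ≠ [] →
            Metric.ball (Moran.comp S.φ i x) (S.slo i * r) ⊆
              Moran.comp S.φ i '' Metric.ball x r := by
  constructor
  · rintro ⟨W, hW, hWne, hlam⟩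
    refine ⟨W, hW, hWne, ?_⟩
    intro x hx
    obtain ⟨lam, hlam1, hli⟩ := hlam x hx
    have hWcne : Wᶜ.Nonempty := Set.nonempty_compl.mpr hWne
    have hρpos : 0 < infDist x Wᶜ := by
      rw [← (hW.1.isClosed_compl.notMem_iff_infDist_pos hWcne)]
      simp [hx]
    set ρ := infDist x Wᶜ with hρ
    have hlam0 : 0 < lam := lt_of_lt_of_le one_pos hlam1
    refine ⟨ρ / (2 * lam), by positivity, ?_⟩
    intro r hr hrrx i hi y hy
    have hslo := S.slo_pos i hi
    rw [Metric.mem_ball] at hy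
    by_cases hyW : y ∈ Moran.comp S.φ i '' W
    · obtain ⟨z, hzW, rfl⟩ := hyW
      refine ⟨z, ?_, rfl⟩
      rw [Metric.mem_ball, dist_comm]
      have h1 := S.lower i hi x z
      rw [dist_comm (Moran.comp S.φ i z)] at hy
      nlinarith
    · exfalso
      have hb : infDist (Moran.comp S.φ i x) ((Moran.comp S.φ i '' W)ᶜ) ≤
          dist (Moran.comp S.φ i x) y := Metric.infDist_le_dist_of_mem hyW
      have ha : S.slo i * ρ ≤ infDist (Moran.comp S.φ i x) (Moran.comp S.φ i '' Wᶜ) := by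
        refine le_of_not_gt fun hlt => ?_
        obtain ⟨u, ⟨w, hw, rfl⟩, hdu⟩ :=
          (Metric.infDist_lt_iff (hWcne.image _)).mp hlt
        have h1 := S.lower i hi x w
        have h2 : ρ ≤ dist x w := Metric.infDist_le_dist_of_mem hw
        nlinarith
      have hchain := hli i hi
      rw [dist_comm] at hy
      have h3 : S.slo i * ρ < lam * (S.slo i * r) := by
        nlinarith [mul_le_mul_of_nonneg_left hb hlam0.le,
          mul_lt_mul_of_pos_left hy hlam0]
      have h4 : ρ < lam * r := by nlinarith
      have h5 : lam * (ρ / (2 * lam)) = ρ / 2 := by field_simp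
      nlinarith [mul_le_mul_of_nonneg_left hrrx hlam0.le]
  · rintro ⟨W, hW, hWne, hball⟩
    refine ⟨W, hW, hWne, ?_⟩
    intro x hx
    obtain ⟨rx, hrx, hb⟩ := hball x hx
    have hWcne : Wᶜ.Nonempty := Set.nonempty_compl.mpr hWne
    have hρpos : 0 < infDist x Wᶜ := by
      rw [← (hW.1.isClosed_compl.notMem_iff_infDist_pos hWcne)]
      simp [hx]
    set ρ := infDist x Wᶜ with hρ
    set m := min ρ rx with hm
    have hmpos : 0 < m := lt_min hρpos hrx
    obtain ⟨w, hw, hdw⟩ := (Metric.infDist_lt_iff hWcne).mp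
      (show infDist x Wᶜ < 2 * ρ by linarith)
    have hD := S.one_le_D
    refine ⟨max 1 (2 * S.D * ρ / m), le_max_left _ _, ?_⟩
    intro i hi
    have hslo := S.slo_pos i hi
    have hshiD := S.shi_le_D_slo i hi
    -- upper bound on a
    have ha : infDist (Moran.comp S.φ i x) (Moran.comp S.φ i '' Wᶜ) ≤
        S.D * S.slo i * (2 * ρ) := by
      calc infDist (Moran.comp S.φ i x) (Moran.comp S.φ i '' Wᶜ) ≤
          dist (Moran.comp S.φ i x) (Moran.comp S.φ i w) :=
            Metric.infDist_le_dist_of_mem (Set.mem_image_of_mem _ hw)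
        _ ≤ S.shi i * dist x w := S.upper i hi x w
        _ ≤ S.D * S.slo i * (2 * ρ) := by
            nlinarith [dist_nonneg (x := x) (y := w), S.slo_le_shi i hi, hρpos.le]
    -- ball x m ⊆ W
    have hsub : Metric.ball x m ⊆ W := by
      intro z hz
      by_contra hzW
      have : ρ ≤ dist x z := Metric.infDist_le_dist_of_mem hzW
      rw [Metric.mem_ball, dist_comm] at hz
      have : m ≤ ρ := min_le_left _ _
      linarith
    have himg : Metric.ball (Moran.comp S.φ i x) (S.slo i * m) ⊆
        Moran.comp S.φ i '' W :=
      (hb m hmpos (min_le_right _ _) i hi).trans (Set.image_mono hsub)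
    -- injectivity of comp
    have hinj : ∀ a b : M, Moran.comp S.φ i a = Moran.comp S.φ i b → a = b := by
      intro a b h
      have h1 := S.lower i hi a b
      rw [h, dist_self] at h1
      have : dist a b ≤ 0 := by nlinarith
      exact dist_le_zero.mp this
    have hcne : ((Moran.comp S.φ i '' W)ᶜ).Nonempty := by
      refine ⟨Moran.comp S.φ i w, fun h => ?_⟩
      obtain ⟨w', hw', he⟩ := h
      exact hw (hinj w' w he ▸ hw')
    have hbge : S.slo i * m ≤ infDist (Moran.comp S.φ i x) ((Moran.comp S.φ i '' W)ᶜ) := by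
      refine le_of_not_gt fun hlt => ?_
      obtain ⟨u, hu, hdu⟩ := (Metric.infDist_lt_iff hcne).mp hlt
      exact hu (himg (by rwa [Metric.mem_ball, dist_comm]))
    have hbnn : 0 ≤ infDist (Moran.comp S.φ i x) ((Moran.comp S.φ i '' W)ᶜ) :=
      Metric.infDist_nonneg
    calc infDist (Moran.comp S.φ i x) (Moran.comp S.φ i '' Wᶜ) ≤
        S.D * S.slo i * (2 * ρ) := ha
      _ = (2 * S.D * ρ / m) * (S.slo i * m) := by field_simp
      _ ≤ (2 * S.D * ρ / m) * infDist (Moran.comp S.φ i x) ((Moran.comp S.φ i '' W)ᶜ) := by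
          apply mul_le_mul_of_nonneg_left hbge
          positivity
      _ ≤ max 1 (2 * S.D * ρ / m) * infDist (Moran.comp S.φ i x) ((Moran.comp S.φ i '' W)ᶜ) :=
          mul_le_mul_of_nonneg_right (le_max_right _ _) hbnn
end
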